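/- Let G be a connected graph and e = uv an edge of G that is not a bridge. Then χ_dom(G) − 1 ≤ χ_dom(G − e) ≤ χ_dom(G) + 2. -/

import Mathlib

open SimpleGraph

/-- A coloring is a dominated coloring if every (nonempty) color class is contained
in the open neighborhood of some vertex. -/
def IsDomColoring {V α : Type*} (G : SimpleGraph V) (C : G.Coloring α) : Prop :=
  ∀ c : α, (∃ u, C u = c) → ∃ v, ∀ u, C u = c → G.Adj v u

/-- The dominated chromatic number of a graph: the least number of colors
in a dominated coloring. -/
noncomputable def domChromatic {V : Type*} (G : SimpleGraph V) : ℕ :=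
  sInf {n | ∃ C : G.Coloring (Fin n), IsDomColoring G C}

private lemma exists_adj_of_reachable {V : Type*} {G : SimpleGraph V} {u v : V}
    (h : G.Reachable u v) (hne : u ≠ v) : ∃ w, G.Adj u w := by
  obtain ⟨p⟩ := h
  cases p with
  | nil => exact absurd rfl hne
  | cons h q => exact ⟨_, h⟩

/-- From a dominated coloring of G-e with n colors, get one of G with n+1 colors. -/
private lemma lemA {V : Type*} (G : SimpleGraph V) (u v : V) (he : G.Adj u v) {n : ℕ}
    (h : ∃ C : (G.deleteEdges {s(u, v)}).Coloring (Fin n),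
      IsDomColoring (G.deleteEdges {s(u, v)}) C) :
    ∃ C : G.Coloring (Fin (n + 1)), IsDomColoring G C := by
  classical
  set G' := G.deleteEdges {s(u, v)} with hG'
  obtain ⟨C, hC⟩ := h
  set f : V → Fin (n + 1) := fun x => if x = u then Fin.last n else (C x).castSucc with hf
  have hfu : f u = Fin.last n := by simp [hf]
  have hfo : ∀ x, x ≠ u → f x = (C x).castSucc := fun x hx => by simp [hf, hx]
  have hGle : G' ≤ G := deleteEdges_le _
  have hv : ∀ {a b : V}, G.Adj a b → f a ≠ f b := by
    intro a b hab
    by_cases ha : a = u <;> by_cases hb : b = u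
    · exact absurd (ha ▸ hb ▸ hab) (G.irrefl)
    · rw [ha, hfu, hfo b hb]
      exact (Fin.castSucc_lt_last _).ne'
    · rw [hb, hfu, hfo a ha]
      exact (Fin.castSucc_lt_last _).ne
    · rw [hfo a ha, hfo b hb]
      have hab' : G'.Adj a b := by
        rw [hG', deleteEdges_adj]
        refine ⟨hab, ?_⟩
        simp only [Set.mem_singleton_iff, Sym2.eq_iff]
        rintro (⟨rfl, rfl⟩ | ⟨rfl, rfl⟩) <;> simp_all
      intro hcc
      exact C.valid hab' (Fin.castSucc_injective _ hcc)
  refine ⟨Coloring.mk f hv, ?_⟩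
  intro c hc
  obtain ⟨x, hx⟩ := hc
  replace hx : f x = c := hx
  rcases Fin.eq_castSucc_or_eq_last c with ⟨d, rfl⟩ | rfl
  · by_cases hxu : x = u
    · rw [hxu, hfu] at hx
      exact absurd hx.symm (Fin.castSucc_lt_last _).ne
    · rw [hfo x hxu] at hx
      obtain ⟨w, hw⟩ := hC d ⟨x, Fin.castSucc_injective _ hx⟩
      refine ⟨w, fun y hy => ?_⟩
      replace hy : f y = d.castSucc := hy
      by_cases hyu : y = u
      · rw [hyu, hfu] at hy
        exact absurd hy.symm (Fin.castSucc_lt_last _).ne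
      · rw [hfo y hyu] at hy
        exact hGle (hw y (Fin.castSucc_injective _ hy))
  · refine ⟨v, fun y hy => ?_⟩
    replace hy : f y = Fin.last n := hy
    by_cases hyu : y = u
    · exact hyu ▸ he.symm
    · rw [hfo y hyu] at hy
      exact absurd hy (Fin.castSucc_lt_last _).ne

/-- From a dominated coloring of G with n colors (e not a bridge), get one of G-e with
n+2 colors. -/
private lemma lemB {V : Type*} (G : SimpleGraph V) (u v : V) (he : G.Adj u v)
    (hb : ¬ G.IsBridge s(u, v)) {n : ℕ}
    (h : ∃ C : G.Coloring (Fin n), IsDomColoring G C) :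
    ∃ C : (G.deleteEdges {s(u, v)}).Coloring (Fin (n + 2)),
      IsDomColoring (G.deleteEdges {s(u, v)}) C := by
  classical
  set G' := G.deleteEdges {s(u, v)} with hG'
  obtain ⟨C, hC⟩ := h
  have hGle : G' ≤ G := deleteEdges_le _
  have hreach : G'.Reachable u v := by
    rw [isBridge_iff] at hb
    exact not_not.mp hb
  obtain ⟨a, ha⟩ := exists_adj_of_reachable hreach he.ne
  obtain ⟨b, hbv⟩ := exists_adj_of_reachable hreach.symm he.ne.symm
  set cu : Fin (n + 2) := Fin.last (n + 1) with hcu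
  set cv : Fin (n + 2) := (Fin.last n).castSucc with hcv
  set f : V → Fin (n + 2) := fun x =>
    if x = u then cu else if x = v then cv else (C x).castSucc.castSucc with hf
  have hfu : f u = cu := by simp [hf]
  have hfv : f v = cv := by simp [hf, he.ne.symm]
  have hfo : ∀ x, x ≠ u → x ≠ v → f x = (C x).castSucc.castSucc :=
    fun x h1 h2 => by simp [hf, h1, h2]
  have hone : ∀ x, (C x).castSucc.castSucc ≠ cu :=
    fun x => (Fin.castSucc_lt_last _).ne
  have honev : ∀ x, (C x).castSucc.castSucc ≠ cv := by
    intro x hx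
    exact (Fin.castSucc_lt_last _).ne (Fin.castSucc_injective _ hx)
  have huv : cu ≠ cv := (Fin.castSucc_lt_last _).ne'
  have hv : ∀ {x y : V}, G'.Adj x y → f x ≠ f y := by
    intro x y hxy
    have hne : x ≠ y := hxy.ne
    by_cases hxu : x = u <;> by_cases hyu : y = u <;>
      by_cases hxv : x = v <;> by_cases hyv : y = v
    all_goals first
      | (exact absurd (hxu.symm.trans hxv) he.ne)
      | (exact absurd (hyu.symm.trans hyv) he.ne)
      | (exfalso; exact hne (by rw [hxu, hyu]))
      | (exfalso; exact hne (by rw [hxv, hyv]))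
      | (rw [hxu, hyv, hfu, hfv]; exact huv)
      | (rw [hyu, hxv, hfu, hfv]; exact huv.symm)
      | (rw [hxu, hfu, hfo y hyu hyv]; exact (hone y).symm)
      | (rw [hyu, hfu, hfo x hxu hxv]; exact hone x)
      | (rw [hxv, hfv, hfo y hyu hyv]; exact (honev y).symm)
      | (rw [hyv, hfv, hfo x hxu hxv]; exact honev x)
      | (rw [hfo x hxu hxv, hfo y hyu hyv]
         intro hcc
         exact C.valid (hGle hxy)
           (Fin.castSucc_injective _ (Fin.castSucc_injective _ hcc)))
  refine ⟨Coloring.mk f hv, ?_⟩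
  intro c hc
  obtain ⟨x, hx⟩ := hc
  replace hx : f x = c := hx
  by_cases hcu' : c = cu
  · subst hcu'
    refine ⟨a, fun y hy => ?_⟩
    replace hy : f y = cu := hy
    by_cases hyu : y = u
    · exact hyu ▸ ha.symm
    by_cases hyv : y = v
    · rw [hyv, hfv] at hy
      exact absurd hy.symm huv
    · rw [hfo y hyu hyv] at hy
      exact absurd hy (hone y)
  by_cases hcv' : c = cv
  · subst hcv'
    refine ⟨b, fun y hy => ?_⟩
    replace hy : f y = cv := hy
    by_cases hyu : y = u
    · rw [hyu, hfu] at hy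
      exact absurd hy huv
    by_cases hyv : y = v
    · exact hyv ▸ hbv.symm
    · rw [hfo y hyu hyv] at hy
      exact absurd hy (honev y)
  · -- ordinary class
    have hxu : x ≠ u := fun h => hcu' (by rw [← hx, h, hfu])
    have hxv : x ≠ v := fun h => hcv' (by rw [← hx, h, hfv])
    rw [hfo x hxu hxv] at hx
    obtain ⟨w, hw⟩ := hC (C x) ⟨x, rfl⟩
    refine ⟨w, fun y hy => ?_⟩
    replace hy : f y = c := hy
    have hyu : y ≠ u := fun h => hcu' (by rw [← hy, h, hfu])
    have hyv : y ≠ v := fun h => hcv' (by rw [← hy, h, hfv])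
    rw [hfo y hyu hyv, ← hx] at hy
    have hyd : C y = C x :=
      Fin.castSucc_injective _ (Fin.castSucc_injective _ hy)
    have hwy : G.Adj w y := hw y hyd
    rw [hG', deleteEdges_adj]
    refine ⟨hwy, ?_⟩
    simp only [Set.mem_singleton_iff, Sym2.eq_iff]
    rintro (⟨rfl, rfl⟩ | ⟨rfl, rfl⟩) <;> simp_all
  
theorem domChromatic_deleteEdge_bounds {V : Type*} (G : SimpleGraph V) (u v : V)
    (hG : G.Connected) (he : G.Adj u v) (hb : ¬ G.IsBridge s(u, v)) :
    (domChromatic G : ℤ) - 1 ≤ domChromatic (G.deleteEdges {s(u, v)}) ∧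
    domChromatic (G.deleteEdges {s(u, v)}) ≤ domChromatic G + 2 := by
  classical
  set S : Set ℕ := {n | ∃ C : G.Coloring (Fin n), IsDomColoring G C} with hS
  set S' : Set ℕ := {n | ∃ C : (G.deleteEdges {s(u, v)}).Coloring (Fin n),
    IsDomColoring (G.deleteEdges {s(u, v)}) C} with hS'
  have hAB : ∀ n ∈ S', n + 1 ∈ S := fun n hn => lemA G u v he hn
  have hBA : ∀ n ∈ S, n + 2 ∈ S' := fun n hn => lemB G u v he hb hn
  constructor
  · by_cases hne : S'.Nonempty
    · have hmem : sInf S' ∈ S' := Nat.sInf_mem hne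
      have h1 : sInf S' + 1 ∈ S := hAB _ hmem
      have h2 : sInf S ≤ sInf S' + 1 := Nat.sInf_le h1
      have h3 : domChromatic G ≤ domChromatic (G.deleteEdges {s(u, v)}) + 1 := h2
      have := Int.ofNat_le.mpr h3
      push_cast at this ⊢
      omega
    · have hSe : ¬ S.Nonempty := fun ⟨n, hn⟩ => hne ⟨n + 2, hBA n hn⟩
      have h1 : domChromatic G = 0 := by
        rw [domChromatic, ← hS, Set.not_nonempty_iff_eq_empty.mp hSe, Nat.sInf_empty]
      rw [h1]
      have h2 := Int.natCast_nonneg (domChromatic (G.deleteEdges {s(u, v)}))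
      omega
  · by_cases hne : S.Nonempty
    · have hmem : sInf S ∈ S := Nat.sInf_mem hne
      have h1 : sInf S + 2 ∈ S' := hBA _ hmem
      exact Nat.sInf_le h1
    · have hSe : ¬ S'.Nonempty := fun ⟨n, hn⟩ => hne ⟨n + 1, hAB n hn⟩
      have h1 : domChromatic (G.deleteEdges {s(u, v)}) = 0 := by
        rw [domChromatic, ← hS', Set.not_nonempty_iff_eq_empty.mp hSe, Nat.sInf_empty]
      rw [h1]
      simp
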